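/- Let t > 0 and let a > 1 be a real number. The average Age of Information of Case 2, Ā(θ) = tθ/(θ − at) + (t²/(θ − at)) · (a² − a)/2, satisfies the identity Ā(θ) = t + (a² + a)t²/(2(θ − at)) for θ > at, and is strictly convex and strictly decreasing on the interval (at, ∞). -/

import Mathlib

/-- In Case 2, for t > 0 and a > 1, the average AoI
Ā(θ) = tθ/(θ − at) + (t²/(θ − at))·(a² − a)/2 equals
t + (a² + a)t²/(2(θ − at)) for θ > at, and Ā is strictly convex and strictly
decreasing on (at, ∞). -/
theorem case2_aoi_identity_convex_decreasing
    (t a : ℝ) (ht : 0 < t) (ha : 1 < a) :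
    (∀ θ : ℝ, a * t < θ →
      t * θ / (θ - a * t) + (t ^ 2 / (θ - a * t)) * ((a ^ 2 - a) / 2) =
        t + (a ^ 2 + a) * t ^ 2 / (2 * (θ - a * t))) ∧
    StrictConvexOn ℝ (Set.Ioi (a * t))
      (fun θ : ℝ =>
        t * θ / (θ - a * t) + (t ^ 2 / (θ - a * t)) * ((a ^ 2 - a) / 2)) ∧
    StrictAntiOn
      (fun θ : ℝ =>
        t * θ / (θ - a * t) + (t ^ 2 / (θ - a * t)) * ((a ^ 2 - a) / 2))
      (Set.Ioi (a * t)) := by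
  have hA : 0 < (a ^ 2 + a) * t ^ 2 := by nlinarith [sq_nonneg t, sq_nonneg a]
  have hid : ∀ θ : ℝ, a * t < θ →
      t * θ / (θ - a * t) + (t ^ 2 / (θ - a * t)) * ((a ^ 2 - a) / 2) =
        t + (a ^ 2 + a) * t ^ 2 / (2 * (θ - a * t)) := by
    intro θ hθ
    have h : θ - a * t ≠ 0 := ne_of_gt (by linarith)
    have h2 : θ - t * a ≠ 0 := by rwa [mul_comm]
    field_simp
    ring
  refine ⟨hid, ⟨convex_Ioi _, ?_⟩, ?_⟩
  · intro x hx y hy hne p q hp hq hpq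
    have hq1 : q = 1 - p := by linarith
    subst hq1
    simp only [Set.mem_Ioi] at hx hy
    have hx' : 0 < x - a * t := by linarith
    have hy' : 0 < y - a * t := by linarith
    have e : p * x + (1 - p) * y - a * t = p * (x - a * t) + (1 - p) * (y - a * t) := by
      linear_combination (a * t) * hpq
    have hz' : 0 < p * x + (1 - p) * y - a * t := by
      rw [e]; positivity
    have hz : a * t < p * x + (1 - p) * y := by linarith
    have hne' : x - y ≠ 0 := sub_ne_zero.mpr hne
    have hsq : 0 < (x - y) ^ 2 := by positivity
    simp only [smul_eq_mul]
    rw [hid _ hx, hid _ hy, hid _ hz]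
    have e2 : p * (t + (a ^ 2 + a) * t ^ 2 / (2 * (x - a * t))) +
        (1 - p) * (t + (a ^ 2 + a) * t ^ 2 / (2 * (y - a * t))) =
        t + (p * (y - a * t) + (1 - p) * (x - a * t)) * ((a ^ 2 + a) * t ^ 2) /
          (2 * ((x - a * t) * (y - a * t))) := by
      have hx0 : x - t * a ≠ 0 := by rw [mul_comm]; exact hx'.ne'
      have hy0 : y - t * a ≠ 0 := by rw [mul_comm]; exact hy'.ne'
      field_simp
      ring
    rw [e2]
    have key : (a ^ 2 + a) * t ^ 2 / (2 * (p * x + (1 - p) * y - a * t)) <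
        (p * (y - a * t) + (1 - p) * (x - a * t)) * ((a ^ 2 + a) * t ^ 2) /
          (2 * ((x - a * t) * (y - a * t))) := by
      rw [div_lt_div_iff₀ (by positivity) (by positivity)]
      have hpq' : 0 < p * (1 - p) := mul_pos hp (by linarith)
      nlinarith [mul_pos hA (mul_pos hpq' hsq)]
    linarith
  · intro x hx y hy hxy
    simp only [Set.mem_Ioi] at hx hy
    have hx' : 0 < x - a * t := by linarith
    simp only []
    rw [hid _ hx, hid _ hy]
    have : (a ^ 2 + a) * t ^ 2 / (2 * (y - a * t)) <
        (a ^ 2 + a) * t ^ 2 / (2 * (x - a * t)) := by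
      apply div_lt_div_of_pos_left hA (by positivity) (by linarith)
    linarith
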